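/- Let (P,≤) and (P,⪯) be two finite posets on the same domain. If max(P,≤) = max(P,⪯) and for all a,b,c ∈ P the induced three-element posets ({a,b,c},≤) and ({a,b,c},⪯) are rotation-equivalent, then (P,≤) = (P,⪯). -/

import Mathlib

universe u

variable {P : Type u}

/-- `A` is a downset (downward closed set) w.r.t. the relation `le`. -/
def IsDownset (le : P → P → Prop) (A : Set P) : Prop :=
  ∀ ⦃x⦄, x ∈ A → ∀ ⦃y⦄, le y x → y ∈ A

/-- `C` is an upset (upward closed set) w.r.t. the relation `le`. -/
def IsUpset (le : P → P → Prop) (C : Set P) : Prop :=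
  ∀ ⦃x⦄, x ∈ C → ∀ ⦃y⦄, le x y → y ∈ C

/-- `x` and `y` are incomparable w.r.t. `le`. -/
def Incomp (le : P → P → Prop) (x y : P) : Prop := ¬ le x y ∧ ¬ le y x

/-- Strictly less: `le x y` and `x ≠ y`. -/
def SLT (le : P → P → Prop) (x y : P) : Prop := le x y ∧ x ≠ y

/-- The conditions under which the rotation `R_{A,C}` is defined:
`A`, `C` disjoint, `A` a downset, `C` an upset, and every element of `A`
strictly below every element of `C`. -/
def RotOK (le : P → P → Prop) (A C : Set P) : Prop :=
  Disjoint A C ∧ IsDownset le A ∧ IsUpset le C ∧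
    ∀ a ∈ A, ∀ c ∈ C, le a c ∧ a ≠ c

/-- The rotation `R_{A,C}` of the relation `le`; the middle block `B` is the
complement of `A ∪ C`. -/
def Rot (le : P → P → Prop) (A C : Set P) : P → P → Prop := fun x y =>
  (((x ∈ A ∧ y ∈ A) ∨ (x ∉ A ∧ x ∉ C ∧ y ∉ A ∧ y ∉ C) ∨ (x ∈ C ∧ y ∈ C)) ∧ le x y) ∨
  (x ∉ A ∧ x ∉ C ∧ y ∈ A ∧ Incomp le x y) ∨
  (x ∈ C ∧ y ∈ A) ∨
  (x ∈ C ∧ y ∉ A ∧ y ∉ C ∧ Incomp le x y)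

/-- One rotation step between two relations on the same domain. -/
def RotStep (le le' : P → P → Prop) : Prop :=
  ∃ A C, RotOK le A C ∧ le' = Rot le A C

/-- Rotation-equivalence: the reflexive-transitive closure of rotation steps. -/
def RotEquiv (le le' : P → P → Prop) : Prop :=
  Relation.ReflTransGen RotStep le le'

/-- Restriction of a relation to a subset (as a relation on the subtype). -/
def restrictRel (le : P → P → Prop) (S : Set P) : S → S → Prop :=
  fun x y => le x.1 y.1

/-- The set of maximal elements of a relation. -/
def maxSet (le : P → P → Prop) : Set P := {x | ∀ y, le x y → y = x}

/-- The rotation class `O₂` of a three element poset `{a,b,c}`: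
chains `a<b<c`, `b<c<a`, `c<a<b`, and the posets with single comparability
`a<b`, `b<c`, `c<a`. -/
def O2rel (le : P → P → Prop) (a b c : P) : Prop :=
  (SLT le a b ∧ SLT le b c) ∨ (SLT le b c ∧ SLT le c a) ∨ (SLT le c a ∧ SLT le a b) ∨
  (SLT le a b ∧ Incomp le a c ∧ Incomp le b c) ∨
  (SLT le b c ∧ Incomp le b a ∧ Incomp le c a) ∨
  (SLT le c a ∧ Incomp le c b ∧ Incomp le a b)

/-- The rotation class `O₃`: the dual of `O₂`. -/
def O3rel (le : P → P → Prop) (a b c : P) : Prop := O2rel le c b a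

/-- The rotation class `O₁`: the antichain together with the `V` and `Λ` shaped
three element posets. -/
def O1rel (le : P → P → Prop) (a b c : P) : Prop :=
  (Incomp le a b ∧ Incomp le b c ∧ Incomp le a c) ∨
  (SLT le a b ∧ SLT le a c ∧ Incomp le b c) ∨
  (SLT le b a ∧ SLT le b c ∧ Incomp le a c) ∨
  (SLT le c a ∧ SLT le c b ∧ Incomp le a b) ∨
  (SLT le b a ∧ SLT le c a ∧ Incomp le b c) ∨
  (SLT le a b ∧ SLT le c b ∧ Incomp le a c) ∨
  (SLT le a c ∧ SLT le b c ∧ Incomp le a b)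

/-- The extension property (EXT) characterizing the random poset: every
one-point extension of a finite subposet is realized by some element. -/
def ExtProp (le : P → P → Prop) : Prop :=
  ∀ Q : Set P, Q.Finite → ∀ D U : Set P, D ⊆ Q → U ⊆ Q → Disjoint D U →
    (∀ x ∈ Q, ∀ d ∈ D, le x d → x ∈ D) →
    (∀ x ∈ Q, ∀ u ∈ U, le u x → x ∈ U) →
    (∀ d ∈ D, ∀ u ∈ U, le d u ∧ d ≠ u) →
    ∃ s, s ∉ Q ∧ (∀ d ∈ D, le d s ∧ d ≠ s) ∧ (∀ u ∈ U, le s u ∧ s ≠ u) ∧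
      ∀ x ∈ Q, x ∉ D → x ∉ U → Incomp le s x



section Aux

/-- Fully specified chain `a < b < c` on a labelled triple. -/
def chainF (r : P → P → Prop) (a b c : P) : Prop :=
  r a b ∧ r b c ∧ r a c ∧ ¬ r b a ∧ ¬ r c b ∧ ¬ r c a

/-- Fully specified single relation `a < b` with `c` isolated. -/
def singleF (r : P → P → Prop) (a b c : P) : Prop :=
  r a b ∧ ¬ r b a ∧ ¬ r a c ∧ ¬ r c a ∧ ¬ r b c ∧ ¬ r c b

/-- Fully specified antichain. -/
def antiF (r : P → P → Prop) (a b c : P) : Prop :=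
  ¬ r a b ∧ ¬ r b a ∧ ¬ r a c ∧ ¬ r c a ∧ ¬ r b c ∧ ¬ r c b

/-- Fully specified `V` shape with bottom `a`. -/
def veeF (r : P → P → Prop) (a b c : P) : Prop :=
  r a b ∧ r a c ∧ ¬ r b a ∧ ¬ r c a ∧ ¬ r b c ∧ ¬ r c b

/-- Fully specified `Λ` shape with top `c`. -/
def capF (r : P → P → Prop) (a b c : P) : Prop :=
  r a c ∧ r b c ∧ ¬ r c a ∧ ¬ r c b ∧ ¬ r a b ∧ ¬ r b a

def O1F (r : P → P → Prop) (a b c : P) : Prop :=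
  antiF r a b c ∨ veeF r a b c ∨ veeF r b a c ∨ veeF r c a b ∨
  capF r a b c ∨ capF r a c b ∨ capF r b c a

def O2F (r : P → P → Prop) (a b c : P) : Prop :=
  chainF r a b c ∨ chainF r b c a ∨ chainF r c a b ∨
  singleF r a b c ∨ singleF r b c a ∨ singleF r c a b

def O3F (r : P → P → Prop) (a b c : P) : Prop := O2F r c b a

set_option maxHeartbeats 2000000 in
lemma rotStep_pres_O2 {Q : Type u} {r r' : Q → Q → Prop} (a b c : Q) (h : RotStep r r') :
    O2F r a b c → O2F r' a b c := by
  obtain ⟨A, C, ⟨hd, hdown, hup, hlt⟩, rfl⟩ := h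
  have dA : a ∈ A → a ∈ C → False := fun h1 h2 => Set.disjoint_left.mp hd h1 h2
  have dB : b ∈ A → b ∈ C → False := fun h1 h2 => Set.disjoint_left.mp hd h1 h2
  have dC : c ∈ A → c ∈ C → False := fun h1 h2 => Set.disjoint_left.mp hd h1 h2
  have w1 : b ∈ A → r a b → a ∈ A := fun h1 h2 => hdown h1 h2
  have w2 : a ∈ A → r b a → b ∈ A := fun h1 h2 => hdown h1 h2
  have w3 : c ∈ A → r a c → a ∈ A := fun h1 h2 => hdown h1 h2
  have w4 : a ∈ A → r c a → c ∈ A := fun h1 h2 => hdown h1 h2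
  have w5 : c ∈ A → r b c → b ∈ A := fun h1 h2 => hdown h1 h2
  have w6 : b ∈ A → r c b → c ∈ A := fun h1 h2 => hdown h1 h2
  have u1 : a ∈ C → r a b → b ∈ C := fun h1 h2 => hup h1 h2
  have u2 : b ∈ C → r b a → a ∈ C := fun h1 h2 => hup h1 h2
  have u3 : a ∈ C → r a c → c ∈ C := fun h1 h2 => hup h1 h2
  have u4 : c ∈ C → r c a → a ∈ C := fun h1 h2 => hup h1 h2
  have u5 : b ∈ C → r b c → c ∈ C := fun h1 h2 => hup h1 h2
  have u6 : c ∈ C → r c b → b ∈ C := fun h1 h2 => hup h1 h2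
  have l1 : a ∈ A → b ∈ C → r a b := fun h1 h2 => (hlt a h1 b h2).1
  have l2 : b ∈ A → a ∈ C → r b a := fun h1 h2 => (hlt b h1 a h2).1
  have l3 : a ∈ A → c ∈ C → r a c := fun h1 h2 => (hlt a h1 c h2).1
  have l4 : c ∈ A → a ∈ C → r c a := fun h1 h2 => (hlt c h1 a h2).1
  have l5 : b ∈ A → c ∈ C → r b c := fun h1 h2 => (hlt b h1 c h2).1
  have l6 : c ∈ A → b ∈ C → r c b := fun h1 h2 => (hlt c h1 b h2).1
  clear hd hdown hup hlt
  intro hsh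
  simp only [O2F, chainF, singleF] at hsh
  rcases Classical.em (a ∈ A) with haA | haA <;>
  rcases Classical.em (a ∈ C) with haC | haC <;>
  rcases Classical.em (b ∈ A) with hbA | hbA <;>
  rcases Classical.em (b ∈ C) with hbC | hbC <;>
  rcases Classical.em (c ∈ A) with hcA | hcA <;>
  rcases Classical.em (c ∈ C) with hcC | hcC <;>
  first
    | exact (dA haA haC).elim
    | exact (dB hbA hbC).elim
    | exact (dC hcA hcC).elim
    | (obtain (⟨p1,p2,p3,p4,p5,p6⟩|⟨p1,p2,p3,p4,p5,p6⟩|⟨p1,p2,p3,p4,p5,p6⟩|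
          ⟨p1,p2,p3,p4,p5,p6⟩|⟨p1,p2,p3,p4,p5,p6⟩|⟨p1,p2,p3,p4,p5,p6⟩) := hsh <;>
       simp_all only [O2F, chainF, singleF, Rot, Incomp,
        not_false_eq_true, not_true_eq_false, true_and, and_true, false_and, and_false,
        true_or, or_true, false_or, or_false, and_self, true_implies, false_implies,
        implies_true, not_not])

set_option maxHeartbeats 2000000 in
lemma rotStep_pres_O1 {Q : Type u} {r r' : Q → Q → Prop} (a b c : Q) (h : RotStep r r') :
    O1F r a b c → O1F r' a b c := by
  obtain ⟨A, C, ⟨hd, hdown, hup, hlt⟩, rfl⟩ := h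
  have dA : a ∈ A → a ∈ C → False := fun h1 h2 => Set.disjoint_left.mp hd h1 h2
  have dB : b ∈ A → b ∈ C → False := fun h1 h2 => Set.disjoint_left.mp hd h1 h2
  have dC : c ∈ A → c ∈ C → False := fun h1 h2 => Set.disjoint_left.mp hd h1 h2
  have w1 : b ∈ A → r a b → a ∈ A := fun h1 h2 => hdown h1 h2
  have w2 : a ∈ A → r b a → b ∈ A := fun h1 h2 => hdown h1 h2
  have w3 : c ∈ A → r a c → a ∈ A := fun h1 h2 => hdown h1 h2
  have w4 : a ∈ A → r c a → c ∈ A := fun h1 h2 => hdown h1 h2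
  have w5 : c ∈ A → r b c → b ∈ A := fun h1 h2 => hdown h1 h2
  have w6 : b ∈ A → r c b → c ∈ A := fun h1 h2 => hdown h1 h2
  have u1 : a ∈ C → r a b → b ∈ C := fun h1 h2 => hup h1 h2
  have u2 : b ∈ C → r b a → a ∈ C := fun h1 h2 => hup h1 h2
  have u3 : a ∈ C → r a c → c ∈ C := fun h1 h2 => hup h1 h2
  have u4 : c ∈ C → r c a → a ∈ C := fun h1 h2 => hup h1 h2
  have u5 : b ∈ C → r b c → c ∈ C := fun h1 h2 => hup h1 h2
  have u6 : c ∈ C → r c b → b ∈ C := fun h1 h2 => hup h1 h2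
  have l1 : a ∈ A → b ∈ C → r a b := fun h1 h2 => (hlt a h1 b h2).1
  have l2 : b ∈ A → a ∈ C → r b a := fun h1 h2 => (hlt b h1 a h2).1
  have l3 : a ∈ A → c ∈ C → r a c := fun h1 h2 => (hlt a h1 c h2).1
  have l4 : c ∈ A → a ∈ C → r c a := fun h1 h2 => (hlt c h1 a h2).1
  have l5 : b ∈ A → c ∈ C → r b c := fun h1 h2 => (hlt b h1 c h2).1
  have l6 : c ∈ A → b ∈ C → r c b := fun h1 h2 => (hlt c h1 b h2).1
  clear hd hdown hup hlt
  intro hsh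
  simp only [O1F, antiF, veeF, capF] at hsh
  rcases Classical.em (a ∈ A) with haA | haA <;>
  rcases Classical.em (a ∈ C) with haC | haC <;>
  rcases Classical.em (b ∈ A) with hbA | hbA <;>
  rcases Classical.em (b ∈ C) with hbC | hbC <;>
  rcases Classical.em (c ∈ A) with hcA | hcA <;>
  rcases Classical.em (c ∈ C) with hcC | hcC <;>
  first
    | exact (dA haA haC).elim
    | exact (dB hbA hbC).elim
    | exact (dC hcA hcC).elim
    | (obtain (⟨p1,p2,p3,p4,p5,p6⟩|⟨p1,p2,p3,p4,p5,p6⟩|⟨p1,p2,p3,p4,p5,p6⟩|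
          ⟨p1,p2,p3,p4,p5,p6⟩|⟨p1,p2,p3,p4,p5,p6⟩|⟨p1,p2,p3,p4,p5,p6⟩|
          ⟨p1,p2,p3,p4,p5,p6⟩) := hsh <;>
       simp_all only [O1F, antiF, veeF, capF, Rot, Incomp,
        not_false_eq_true, not_true_eq_false, true_and, and_true, false_and, and_false,
        true_or, or_true, false_or, or_false, and_self, true_implies, false_implies,
        implies_true, not_not])

lemma rotStep_pres_O3 {Q : Type u} {r r' : Q → Q → Prop} (a b c : Q) (h : RotStep r r') :
    O3F r a b c → O3F r' a b c := rotStep_pres_O2 c b a h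

lemma rtg_pres {Q : Type u} {r r'' : Q → Q → Prop} (h : RotEquiv r r'') (a b c : Q) :
    (O1F r a b c → O1F r'' a b c) ∧ (O2F r a b c → O2F r'' a b c) ∧
      (O3F r a b c → O3F r'' a b c) := by
  induction h with
  | refl => exact ⟨id, id, id⟩
  | tail _ hstep ih =>
      exact ⟨fun h1 => rotStep_pres_O1 a b c hstep (ih.1 h1),
             fun h2 => rotStep_pres_O2 a b c hstep (ih.2.1 h2),
             fun h3 => rotStep_pres_O3 a b c hstep (ih.2.2 h3)⟩

set_option maxHeartbeats 1000000 in
lemma coverF (r : P → P → Prop) [IsPartialOrder P r] (a b c : P)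
    (hab : a ≠ b) (hac : a ≠ c) (hbc : b ≠ c) :
    O1F r a b c ∨ O2F r a b c ∨ O3F r a b c := by
  have t1 : r a b → r b c → r a c := fun h1 h2 => _root_.trans h1 h2
  have t2 : r a c → r c b → r a b := fun h1 h2 => _root_.trans h1 h2
  have t3 : r b a → r a c → r b c := fun h1 h2 => _root_.trans h1 h2
  have t4 : r b c → r c a → r b a := fun h1 h2 => _root_.trans h1 h2
  have t5 : r c a → r a b → r c b := fun h1 h2 => _root_.trans h1 h2
  have t6 : r c b → r b a → r c a := fun h1 h2 => _root_.trans h1 h2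
  have s1 : r a b → r b a → False := fun h1 h2 => hab (antisymm h1 h2)
  have s2 : r a c → r c a → False := fun h1 h2 => hac (antisymm h1 h2)
  have s3 : r b c → r c b → False := fun h1 h2 => hbc (antisymm h1 h2)
  rcases Classical.em (r a b) with h1 | h1 <;>
  rcases Classical.em (r b a) with h2 | h2 <;>
  rcases Classical.em (r a c) with h3 | h3 <;>
  rcases Classical.em (r c a) with h4 | h4 <;>
  rcases Classical.em (r b c) with h5 | h5 <;>
  rcases Classical.em (r c b) with h6 | h6 <;>
    simp_all only [O1F, O2F, O3F, antiF, veeF, capF, chainF, singleF,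
      not_false_eq_true, not_true_eq_false, true_and, and_true, false_and, and_false,
      true_or, or_true, false_or, or_false, and_self, true_implies, false_implies,
      implies_true, not_not, or_self]

lemma disj12 (r : P → P → Prop) (a b c : P) : O1F r a b c → O2F r a b c → False := by
  simp only [O1F, O2F, antiF, veeF, capF, chainF, singleF]; tauto

lemma disj13 (r : P → P → Prop) (a b c : P) : O1F r a b c → O3F r a b c → False := by
  simp only [O1F, O2F, O3F, antiF, veeF, capF, chainF, singleF]; tauto

lemma disj23 (r : P → P → Prop) (a b c : P) : O2F r a b c → O3F r a b c → False := by
  simp only [O2F, O3F, chainF, singleF]; tauto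

lemma classEq (le le' : P → P → Prop) [IsPartialOrder P le] [IsPartialOrder P le']
    (h3 : ∀ a b c : P,
      RotEquiv (restrictRel le {a, b, c}) (restrictRel le' {a, b, c}))
    (x y z : P) (hxy : x ≠ y) (hxz : x ≠ z) (hyz : y ≠ z) :
    (O1F le x y z ↔ O1F le' x y z) ∧ (O2F le x y z ↔ O2F le' x y z) ∧
      (O3F le x y z ↔ O3F le' x y z) := by
  have hx : x ∈ ({x, y, z} : Set P) := by simp
  have hy : y ∈ ({x, y, z} : Set P) := by simp
  have hz : z ∈ ({x, y, z} : Set P) := by simp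
  obtain ⟨p1, p2, p3⟩ := rtg_pres (h3 x y z) ⟨x, hx⟩ ⟨y, hy⟩ ⟨z, hz⟩
  have q1 : O1F le x y z → O1F le' x y z := p1
  have q2 : O2F le x y z → O2F le' x y z := p2
  have q3 : O3F le x y z → O3F le' x y z := p3
  have cov := coverF le x y z hxy hxz hyz
  refine ⟨⟨q1, fun h => ?_⟩, ⟨q2, fun h => ?_⟩, ⟨q3, fun h => ?_⟩⟩
  · rcases cov with h1 | h1 | h1
    · exact h1
    · exact (disj12 le' x y z h (q2 h1)).elim
    · exact (disj13 le' x y z h (q3 h1)).elim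
  · rcases cov with h1 | h1 | h1
    · exact (disj12 le' x y z (q1 h1) h).elim
    · exact h1
    · exact (disj23 le' x y z h (q3 h1)).elim
  · rcases cov with h1 | h1 | h1
    · exact (disj13 le' x y z (q1 h1) h).elim
    · exact (disj23 le' x y z (q2 h1) h).elim
    · exact h1

lemma exists_max_elt [Fintype P] (le : P → P → Prop) [IsPartialOrder P le]
    {S : Set P} (hS : S.Nonempty) :
    ∃ x ∈ S, ∀ y ∈ S, le x y → y = x := by
  letI : PartialOrder P :=
    { le := le
      le_refl := fun x => _root_.refl x
      le_trans := fun _ _ _ h1 h2 => _root_.trans h1 h2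
      le_antisymm := fun _ _ h1 h2 => antisymm h1 h2 }
  obtain ⟨x, hx, hmax⟩ := Set.Finite.exists_maximal (Set.toFinite S) hS
  exact ⟨x, hx, fun y hy hxy => le_antisymm (hmax hy hxy) hxy⟩

lemma below_max [Fintype P] (le : P → P → Prop) [IsPartialOrder P le] (x : P) :
    ∃ m, m ∈ maxSet le ∧ le x m := by
  obtain ⟨m, hm, hmax⟩ := exists_max_elt le (S := {y | le x y}) ⟨x, _root_.refl x⟩
  exact ⟨m, fun y hy => hmax y (_root_.trans hm hy) hy, hm⟩

lemma claim1 [Fintype P] (le le' : P → P → Prop)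
    [IsPartialOrder P le] [IsPartialOrder P le']
    (hmax : maxSet le = maxSet le')
    (hcls : ∀ x y z : P, x ≠ y → x ≠ z → y ≠ z →
      ((O1F le x y z ↔ O1F le' x y z) ∧ (O2F le x y z ↔ O2F le' x y z) ∧
        (O3F le x y z ↔ O3F le' x y z))) :
    ∀ x m, m ∈ maxSet le → le x m → x ≠ m → le' x m := by
  by_contra hcon
  push_neg at hcon
  set S : Set P := {x | ∃ m, m ∈ maxSet le ∧ le x m ∧ x ≠ m ∧ ¬ le' x m} with hSdef
  have hS : S.Nonempty := by
    obtain ⟨x, m, h1, h2, h3, h4⟩ := hcon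
    exact ⟨x, m, h1, h2, h3, h4⟩
  obtain ⟨x, hxS, hxmax⟩ := exists_max_elt le hS
  obtain ⟨m, hm, hxm, hxne, hxm'⟩ := hxS
  have hxnotmax : x ∉ maxSet le := fun h => hxne (h m hxm).symm
  have hxnotmax' : x ∉ maxSet le' := hmax ▸ hxnotmax
  have hex : ∃ w, le' x w ∧ w ≠ x := by
    by_contra h
    push_neg at h
    exact hxnotmax' (fun y hy => h y hy)
  obtain ⟨w, hxw', hwx⟩ := hex
  have hm' : m ∈ maxSet le' := hmax ▸ hm
  have hwm : w ≠ m := fun h => hxm' (h ▸ hxw')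
  have f1 : ¬ le' w x := fun h => hwx (antisymm h hxw')
  have f2 : ¬ le' m x := fun h => hxne (hm' x h)
  have f3 : ¬ le' w m := fun h => hxm' (_root_.trans hxw' h)
  have f4 : ¬ le' m w := fun h => hwm (hm' w h)
  have hO3' : O3F le' x m w :=
    Or.inr (Or.inr (Or.inr (Or.inr (Or.inr ⟨hxw', f1, hxm', f2, f3, f4⟩))))
  have hO3 : O3F le x m w :=
    ((hcls x m w hxne hwx.symm (Ne.symm hwm)).2.2).mpr hO3'
  have g1 : ¬ le m x := fun h => hxne (hm x h)
  have g2 : ¬ le m w := fun h => hwm (hm w h)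
  rcases hO3 with hch | hch | hch | hs | hs | hs
  · exact g1 hch.2.1
  · exact g1 hch.1
  · obtain ⟨lxw, lwm, lxm, n1, n2, n3⟩ := hch
    have hwS : w ∈ S := ⟨m, hm, lwm, hwm, f3⟩
    exact hwx (hxmax w hwS lxw)
  · exact hs.2.2.2.2.2 hxm
  · exact g1 hs.1
  · exact hs.2.2.1 hxm

lemma dirF [Fintype P] (le le' : P → P → Prop)
    [IsPartialOrder P le] [IsPartialOrder P le']
    (hmax : maxSet le = maxSet le')
    (hcls : ∀ x y z : P, x ≠ y → x ≠ z → y ≠ z →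
      ((O1F le x y z ↔ O1F le' x y z) ∧ (O2F le x y z ↔ O2F le' x y z) ∧
        (O3F le x y z ↔ O3F le' x y z))) :
    ∀ x y, le x y → le' x y := by
  intro x y h
  by_cases hxy : x = y
  · subst hxy; exact _root_.refl x
  by_cases hy : y ∈ maxSet le
  · exact claim1 le le' hmax hcls x y hy h hxy
  · obtain ⟨m, hm, hym⟩ := below_max le y
    have hyne : y ≠ m := fun e => hy (e ▸ hm)
    have hxm : le x m := _root_.trans h hym
    have hxnem : x ≠ m := fun e => hyne (hm y (e ▸ h))
    have hxm' : le' x m := claim1 le le' hmax hcls x m hm hxm hxnem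
    have hym' : le' y m := claim1 le le' hmax hcls y m hm hym hyne
    have hm' : m ∈ maxSet le' := hmax ▸ hm
    have n1 : ¬ le y x := fun h2 => hxy (antisymm h h2)
    have n2 : ¬ le m y := fun h2 => hyne (hm y h2)
    have n3 : ¬ le m x := fun h2 => hxnem (hm x h2)
    have hO2 : O2F le x y m := Or.inl ⟨h, hym, hxm, n1, n2, n3⟩
    have hO2' : O2F le' x y m := (hcls x y m hxy hxnem hyne).2.1.mp hO2
    have m1 : ¬ le' m x := fun h2 => hxnem (hm' x h2)
    rcases hO2' with hch | hch | hch | hs | hs | hs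
    · exact hch.1
    · exact (m1 hch.2.1).elim
    · exact (m1 hch.1).elim
    · exact hs.1
    · exact (hs.2.2.2.2.2 hxm').elim
    · exact (m1 hs.1).elim

end Aux

theorem stmt8 [Fintype P] (le le' : P → P → Prop)
    [IsPartialOrder P le] [IsPartialOrder P le']
    (hmax : maxSet le = maxSet le')
    (h3 : ∀ a b c : P,
      RotEquiv (restrictRel le {a, b, c}) (restrictRel le' {a, b, c})) :
    le = le' := by
  have hcls := fun x y z hxy hxz hyz => classEq le le' h3 x y z hxy hxz hyz
  have hcls' : ∀ x y z : P, x ≠ y → x ≠ z → y ≠ z →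
      ((O1F le' x y z ↔ O1F le x y z) ∧ (O2F le' x y z ↔ O2F le x y z) ∧
        (O3F le' x y z ↔ O3F le x y z)) := by
    intro x y z hxy hxz hyz
    obtain ⟨i1, i2, i3⟩ := hcls x y z hxy hxz hyz
    exact ⟨i1.symm, i2.symm, i3.symm⟩
  have d1 := dirF le le' hmax hcls
  have d2 := dirF le' le hmax.symm hcls'
  funext x y
  exact propext ⟨d1 x y, d2 x y⟩
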